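/- Let C be a small category with a coverage τ. Assigning to every object X of Ĉ the singleton families {π : Y → X}, where π ranges over the τ-local epimorphisms with target X, defines a coverage τ̂ on Ĉ: every identity family {1_X} is a covering, and for every τ-local epimorphism π : Y → X and every morphism g : Z → X there exists a τ-local epimorphism π' : W → Z such that g ∘ π' factors through π. -/

import Mathlib

universe u

open CategoryTheory CategoryTheory.Limits Opposite

/-- A family of morphisms `{fᵢ : cᵢ ⟶ c}` indexed by a (small) set. -/
structure CoverFamily (C : Type u) [CategoryTheory.SmallCategory C] (c : C) : Type (u + 1) where
  ι : Type u
  obj : ι → C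
  map : ∀ i : ι, obj i ⟶ c

/-- A coverage (Grothendieck pretopology) in the sense of the paper:
identity families are coverings, and coverings admit weak pullbacks. -/
structure PaperCoverage (C : Type u) [CategoryTheory.SmallCategory C] : Type (u + 1) where
  covers : ∀ c : C, Set (CoverFamily C c)
  id_mem : ∀ c : C, (⟨PUnit, fun _ => c, fun _ => 𝟙 c⟩ : CoverFamily C c) ∈ covers c
  pullback_compat : ∀ {c c' : C} (g : c' ⟶ c) (fam : CoverFamily C c), fam ∈ covers c →
    ∃ fam' ∈ covers c', ∀ j : fam'.ι, ∃ (i : fam.ι) (h : fam'.obj j ⟶ fam.obj i),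
      h ≫ fam.map i = fam'.map j ≫ g

variable {C : Type u} [SmallCategory C]

/-- A morphism `π : Y ⟶ X` of presheaves is a `τ`-local epimorphism if every
morphism `y(c) ⟶ X` admits local lifts through `π` along some covering family of `c`. -/
def IsLocalEpi (τ : PaperCoverage C) {Y X : Cᵒᵖ ⥤ Type u} (π : Y ⟶ X) : Prop :=
  ∀ (c : C) (φ : yoneda.obj c ⟶ X),
    ∃ fam ∈ τ.covers c, ∀ j : fam.ι,
      ∃ φj : yoneda.obj (fam.obj j) ⟶ Y, φj ≫ π = yoneda.map (fam.map j) ≫ φ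

/-- The τ-local epimorphisms form a coverage `τ̂` on `Ĉ`:
every identity is a τ-local epimorphism (so the identity singleton families are coverings),
and for every τ-local epimorphism `π : Y ⟶ X` and every morphism `g : Z ⟶ X` there is a
τ-local epimorphism `π' : W ⟶ Z` such that `g ∘ π'` factors through `π`. -/
theorem localEpis_form_coverage (τ : PaperCoverage C) :
    (∀ X : Cᵒᵖ ⥤ Type u, IsLocalEpi τ (𝟙 X)) ∧
    (∀ (X Y Z : Cᵒᵖ ⥤ Type u) (π : Y ⟶ X) (g : Z ⟶ X), IsLocalEpi τ π →
      ∃ (W : Cᵒᵖ ⥤ Type u) (π' : W ⟶ Z), IsLocalEpi τ π' ∧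
        ∃ h : W ⟶ Y, h ≫ π = π' ≫ g) := by
  constructor
  · intro X c φ
    exact ⟨⟨PUnit, fun _ => c, fun _ => 𝟙 c⟩, τ.id_mem c, fun _ =>
      ⟨φ, by simp⟩⟩
  · intro X Y Z π g hπ
    refine ⟨pullback π g, pullback.snd π g, ?_, pullback.fst π g, pullback.condition⟩
    intro c φ
    obtain ⟨fam, hfam, hlift⟩ := hπ c (φ ≫ g)
    refine ⟨fam, hfam, fun j => ?_⟩
    obtain ⟨φj, hφj⟩ := hlift j
    refine ⟨pullback.lift φj (yoneda.map (fam.map j) ≫ φ) (by simpa using hφj), ?_⟩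
    exact pullback.lift_snd _ _ _
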